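/- If G is a hamiltonian cubic graph with m edges then scc(G) = (4/3)m. -/

import Mathlib

open scoped Classical

namespace ShortCycleCovers

variable {V : Type*}

/-- A cycle in `G`: a connected 2-regular subgraph. -/
def IsCycleSub {G : SimpleGraph V} (C : G.Subgraph) : Prop :=
  C.Connected ∧ ∀ v ∈ C.verts, (C.neighborSet v).ncard = 2

/-- A cycle cover of `G`: a family of cycles covering every edge at least once. -/
def IsCycleCover (G : SimpleGraph V) (𝒞 : Multiset G.Subgraph) : Prop :=
  (∀ C ∈ 𝒞, IsCycleSub C) ∧ ∀ e ∈ G.edgeSet, ∃ C ∈ 𝒞, e ∈ C.edgeSet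

/-- The length of a family of cycles: the sum of the numbers of edges of its members. -/
noncomputable def coverLength {G : SimpleGraph V} (𝒞 : Multiset G.Subgraph) : ℕ :=
  (𝒞.map fun C => C.edgeSet.ncard).sum

/-- The weight of an edge w.r.t. a family of cycles: the number of members containing it. -/
noncomputable def edgeWeight {G : SimpleGraph V} (𝒞 : Multiset G.Subgraph) (e : Sym2 V) : ℕ :=
  (𝒞.map fun C => if e ∈ C.edgeSet then 1 else 0).sum

/-- A cycle double cover: a family of cycles covering every edge exactly twice. -/
def IsCDC (G : SimpleGraph V) (𝒞 : Multiset G.Subgraph) : Prop :=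
  (∀ C ∈ 𝒞, IsCycleSub C) ∧ ∀ e ∈ G.edgeSet, edgeWeight 𝒞 e = 2

/-- The length of a shortest cycle cover of `G`. -/
noncomputable def scc (G : SimpleGraph V) : ℕ :=
  sInf {L : ℕ | ∃ 𝒞 : Multiset G.Subgraph, IsCycleCover G 𝒞 ∧ coverLength 𝒞 = L}

/-- A cubic graph: every vertex has degree 3. -/
def IsCubic (G : SimpleGraph V) : Prop := ∀ v : V, (G.neighborSet v).ncard = 3

/-- A bridgeless graph: no cut edge. -/
def Bridgeless (G : SimpleGraph V) : Prop := ∀ e ∈ G.edgeSet, ¬ G.IsBridge e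





lemma two_of_three {s : Set V} (h : s.ncard = 2) {x y z : V}
    (hx : x ∈ s) (hy : y ∈ s) (hz : z ∈ s) : x = y ∨ x = z ∨ y = z := by
  obtain ⟨a, b, hab, rfl⟩ := Set.ncard_eq_two.mp h
  simp only [Set.mem_insert_iff, Set.mem_singleton_iff] at hx hy hz
  rcases hx with rfl | rfl <;> rcases hy with rfl | rfl <;> rcases hz with rfl | rfl <;> tauto

lemma pair_eq {s : Set V} (h : s.ncard = 2) {x y : V} (hx : x ∈ s) (hy : y ∈ s)
    (hxy : x ≠ y) : s = {x, y} := by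
  obtain ⟨a, b, hab, rfl⟩ := Set.ncard_eq_two.mp h
  simp only [Set.mem_insert_iff, Set.mem_singleton_iff] at hx hy
  rcases hx with rfl | rfl <;> rcases hy with rfl | rfl
  · exact absurd rfl hxy
  · rfl
  · exact Set.pair_comm y x
  · exact absurd rfl hxy

/-- handshake in ncard form -/
lemma handshake [Fintype V] (K : SimpleGraph V) :
    ∑ v, (K.neighborSet v).ncard = 2 * K.edgeSet.ncard := by
  classical
  have h := K.sum_degrees_eq_twice_card_edges
  have h1 : ∀ v, (K.neighborSet v).ncard = K.degree v := by
    intro v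
    rw [Set.ncard_eq_toFinset_card', SimpleGraph.degree, SimpleGraph.neighborFinset_def]
  have h2 : K.edgeSet.ncard = K.edgeFinset.card := by
    rw [Set.ncard_eq_toFinset_card', SimpleGraph.edgeFinset]
  simp_rw [h1, h2]
  exact h


lemma spanningCoe_neighborSet {G : SimpleGraph V} (C : G.Subgraph) (v : V) :
    C.spanningCoe.neighborSet v = C.neighborSet v := rfl

lemma spanningCoe_edgeSet {G : SimpleGraph V} (C : G.Subgraph) :
    C.spanningCoe.edgeSet = C.edgeSet := by
  ext e
  induction e using Sym2.ind with
  | _ u v => simp [SimpleGraph.mem_edgeSet, SimpleGraph.Subgraph.mem_edgeSet,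
      SimpleGraph.Subgraph.spanningCoe]

/-- a 2-regular subgraph has as many edges as vertices -/
lemma cycle_edge_card [Fintype V] {G : SimpleGraph V} (C : G.Subgraph)
    (h : ∀ v ∈ C.verts, (C.neighborSet v).ncard = 2) :
    C.edgeSet.ncard = C.verts.ncard := by
  have key := handshake C.spanningCoe
  have h1 : ∀ v, (C.spanningCoe.neighborSet v).ncard = if v ∈ C.verts then 2 else 0 := by
    intro v
    rw [spanningCoe_neighborSet]
    split_ifs with hv
    · exact h v hv
    · rw [Set.ncard_eq_zero]
      ext w
      simp only [SimpleGraph.Subgraph.mem_neighborSet, Set.mem_empty_iff_false, iff_false]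
      intro hadj
      exact hv hadj.fst_mem
  rw [spanningCoe_edgeSet] at key
  simp_rw [h1] at key
  have h2 : ∑ v : V, (if v ∈ C.verts then 2 else 0) = 2 * C.verts.ncard := by
    have hc : (Finset.univ.filter (· ∈ C.verts)).card = C.verts.ncard := by
      rw [Set.ncard_eq_toFinset_card']
      congr 1
      ext v
      simp
    rw [← Finset.sum_filter, Finset.sum_const, smul_eq_mul, hc, mul_comm]
  rw [h2] at key
  omega


lemma per_vertex [Fintype V] {G : SimpleGraph V} (hcubic : IsCubic G) {𝒞 : Multiset G.Subgraph}
    (hcov : IsCycleCover G 𝒞) (v : V) :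
    2 ≤ ∑ C ∈ 𝒞.toFinset, 𝒞.count C * (if v ∈ C.verts then 1 else 0) := by
  obtain ⟨x, y, z, hxy, hxz, hyz, hN⟩ := Set.ncard_eq_three.mp (hcubic v)
  have hx : G.Adj v x := by rw [← SimpleGraph.mem_neighborSet, hN]; simp
  have hy : G.Adj v y := by rw [← SimpleGraph.mem_neighborSet, hN]; simp
  have hz : G.Adj v z := by rw [← SimpleGraph.mem_neighborSet, hN]; simp
  obtain ⟨Cx, hCx, hCxe⟩ := hcov.2 s(v, x) (by rwa [SimpleGraph.mem_edgeSet])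
  obtain ⟨Cy, hCy, hCye⟩ := hcov.2 s(v, y) (by rwa [SimpleGraph.mem_edgeSet])
  obtain ⟨Cz, hCz, hCze⟩ := hcov.2 s(v, z) (by rwa [SimpleGraph.mem_edgeSet])
  rw [SimpleGraph.Subgraph.mem_edgeSet] at hCxe hCye hCze
  have hvx : v ∈ Cx.verts := hCxe.fst_mem
  have hvy : v ∈ Cy.verts := hCye.fst_mem
  have hvz : v ∈ Cz.verts := hCze.fst_mem
  by_cases h2 : ∃ A ∈ 𝒞.toFinset, ∃ B ∈ 𝒞.toFinset, A ≠ B ∧ v ∈ A.verts ∧ v ∈ B.verts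
  · obtain ⟨A, hA, B, hB, hAB, hvA, hvB⟩ := h2
    have hsub : ({A, B} : Finset G.Subgraph) ⊆ 𝒞.toFinset := by
      intro W hW
      simp only [Finset.mem_insert, Finset.mem_singleton] at hW
      rcases hW with rfl | rfl <;> assumption
    have hle := Finset.sum_le_sum_of_subset (f := fun C => 𝒞.count C * (if v ∈ C.verts then 1 else 0)) hsub
    rw [Finset.sum_pair hAB] at hle
    have hA1 : 1 ≤ 𝒞.count A := Multiset.count_pos.mpr (Multiset.mem_toFinset.mp hA)
    have hB1 : 1 ≤ 𝒞.count B := Multiset.count_pos.mpr (Multiset.mem_toFinset.mp hB)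
    rw [if_pos hvA, if_pos hvB] at hle
    exact le_trans (by omega) hle
  · exfalso
    push_neg at h2
    have hxyC : Cx = Cy := by
      by_contra hne
      exact h2 Cx (Multiset.mem_toFinset.mpr hCx) Cy (Multiset.mem_toFinset.mpr hCy) hne hvx hvy
    have hxzC : Cx = Cz := by
      by_contra hne
      exact h2 Cx (Multiset.mem_toFinset.mpr hCx) Cz (Multiset.mem_toFinset.mpr hCz) hne hvx hvz
    have h2card := (hcov.1 Cx hCx).2 v hvx
    have := two_of_three h2card ((SimpleGraph.Subgraph.mem_neighborSet _ _ _).mpr hCxe)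
      ((SimpleGraph.Subgraph.mem_neighborSet _ _ _).mpr (hxyC ▸ hCye))
      ((SimpleGraph.Subgraph.mem_neighborSet _ _ _).mpr (hxzC ▸ hCze))
    tauto

lemma verts_ncard_eq_sum [Fintype V] {G : SimpleGraph V} (C : G.Subgraph) :
    C.verts.ncard = ∑ v : V, (if v ∈ C.verts then 1 else 0) := by
  rw [Set.ncard_eq_toFinset_card']
  rw [← Finset.sum_filter]
  simp only [Finset.sum_const, smul_eq_mul, mul_one]
  congr 1
  ext v
  simp

lemma lower_bound [Fintype V] {G : SimpleGraph V} (hcubic : IsCubic G) {𝒞 : Multiset G.Subgraph}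
    (hcov : IsCycleCover G 𝒞) : 2 * Fintype.card V ≤ coverLength 𝒞 := by
  have h1 : coverLength 𝒞 = ∑ C ∈ 𝒞.toFinset, 𝒞.count C * C.verts.ncard := by
    rw [coverLength, Finset.sum_multiset_map_count]
    apply Finset.sum_congr rfl
    intro C hC
    rw [smul_eq_mul]
    congr 1
    exact cycle_edge_card C (hcov.1 C (Multiset.mem_toFinset.mp hC)).2
  calc 2 * Fintype.card V = ∑ _v : V, 2 := by rw [Finset.sum_const, smul_eq_mul, mul_comm]; simp
  _ ≤ ∑ v : V, ∑ C ∈ 𝒞.toFinset, 𝒞.count C * (if v ∈ C.verts then 1 else 0) :=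
      Finset.sum_le_sum fun v _ => per_vertex hcubic hcov v
  _ = ∑ C ∈ 𝒞.toFinset, ∑ v : V, 𝒞.count C * (if v ∈ C.verts then 1 else 0) := Finset.sum_comm
  _ = coverLength 𝒞 := by
      rw [h1]
      apply Finset.sum_congr rfl
      intro C _
      rw [← Finset.mul_sum, ← verts_ncard_eq_sum]




lemma two_of_three' {s : Set V} (h : s.ncard = 2) {x y z : V}
    (hx : x ∈ s) (hy : y ∈ s) (hz : z ∈ s) : x = y ∨ x = z ∨ y = z := by
  obtain ⟨a, b, hab, rfl⟩ := Set.ncard_eq_two.mp h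
  simp only [Set.mem_insert_iff, Set.mem_singleton_iff] at hx hy hz
  rcases hx with rfl | rfl <;> rcases hy with rfl | rfl <;> rcases hz with rfl | rfl <;> tauto

lemma other_unique {K : SimpleGraph V} (hreg : ∀ v, (K.neighborSet v).ncard = 2)
    {u v : V} (h : K.Adj u v) : ∃! w, K.Adj v w ∧ w ≠ u := by
  obtain ⟨x, y, hxy, hN⟩ := Set.ncard_eq_two.mp (hreg v)
  have hu : u ∈ K.neighborSet v := h.symm
  have hxv : K.Adj v x := by
    have : x ∈ K.neighborSet v := by rw [hN]; simp
    exact this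
  have hyv : K.Adj v y := by
    have : y ∈ K.neighborSet v := by rw [hN]; simp
    exact this
  rw [hN] at hu
  simp only [Set.mem_insert_iff, Set.mem_singleton_iff] at hu
  rcases hu with rfl | rfl
  · refine ⟨y, ⟨hyv, hxy.symm⟩, ?_⟩
    rintro w ⟨hw, hwu⟩
    have : w ∈ K.neighborSet v := hw
    rw [hN] at this
    simp only [Set.mem_insert_iff, Set.mem_singleton_iff] at this
    tauto
  · refine ⟨x, ⟨hxv, hxy⟩, ?_⟩
    rintro w ⟨hw, hwu⟩
    have : w ∈ K.neighborSet v := hw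
    rw [hN] at this
    simp only [Set.mem_insert_iff, Set.mem_singleton_iff] at this
    tauto

/-- the neighbor of `v` other than `u` -/
noncomputable def oth {K : SimpleGraph V} (hreg : ∀ v, (K.neighborSet v).ncard = 2)
    {u v : V} (h : K.Adj u v) : V :=
  (other_unique hreg h).exists.choose

lemma oth_spec {K : SimpleGraph V} (hreg : ∀ v, (K.neighborSet v).ncard = 2)
    {u v : V} (h : K.Adj u v) : K.Adj v (oth hreg h) ∧ oth hreg h ≠ u :=
  (other_unique hreg h).exists.choose_spec

lemma oth_eq {K : SimpleGraph V} (hreg : ∀ v, (K.neighborSet v).ncard = 2)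
    {u v w : V} (h : K.Adj u v) (hw : K.Adj v w) (hne : w ≠ u) : w = oth hreg h :=
  (other_unique hreg h).unique ⟨hw, hne⟩ (oth_spec hreg h)

/-- the next dart when walking around -/
noncomputable def nd {K : SimpleGraph V} (hreg : ∀ v, (K.neighborSet v).ncard = 2)
    (d : K.Dart) : K.Dart :=
  ⟨(d.snd, oth hreg d.adj), (oth_spec hreg d.adj).1⟩

lemma nd_fst {K : SimpleGraph V} (hreg : ∀ v, (K.neighborSet v).ncard = 2) (d : K.Dart) :
    (nd hreg d).fst = d.snd := rfl

lemma nd_snd_ne {K : SimpleGraph V} (hreg : ∀ v, (K.neighborSet v).ncard = 2) (d : K.Dart) :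
    (nd hreg d).snd ≠ d.fst := (oth_spec hreg d.adj).2

lemma nd_inj {K : SimpleGraph V} (hreg : ∀ v, (K.neighborSet v).ncard = 2) :
    Function.Injective (nd hreg) := by
  intro d d' h
  have h1 : d.snd = d'.snd := by
    exact congrArg (fun d : K.Dart => d.fst) h
  have h2 : (nd hreg d).snd = (nd hreg d').snd := congrArg (fun d : K.Dart => d.snd) h
  have hw : K.Adj d.snd (nd hreg d).snd := (oth_spec hreg d.adj).1
  have hfst : K.Adj d.snd d.fst := d.adj.symm
  have hfst' : K.Adj d.snd d'.fst := h1 ▸ d'.adj.symm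
  have htri := two_of_three' (hreg d.snd) (x := d.fst) (y := d'.fst) (z := (nd hreg d).snd)
    hfst.symm.symm hfst'.symm.symm hw.symm.symm
  have hne : d.fst ≠ (nd hreg d).snd := (nd_snd_ne hreg d).symm
  have hne' : d'.fst ≠ (nd hreg d).snd := by
    rw [h2]
    exact (nd_snd_ne hreg d').symm
  have h3 : d.fst = d'.fst := by tauto
  exact SimpleGraph.Dart.ext _ _ (Prod.ext h3 h1)

/-- the dart sequence walking around the cycle -/
noncomputable def Dseq {K : SimpleGraph V} (hreg : ∀ v, (K.neighborSet v).ncard = 2)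
    (d0 : K.Dart) : ℕ → K.Dart
  | 0 => d0
  | (n + 1) => nd hreg (Dseq hreg d0 n)


lemma pair_eq' {s : Set V} (h : s.ncard = 2) {x y : V} (hx : x ∈ s) (hy : y ∈ s)
    (hxy : x ≠ y) : s = {x, y} := by
  obtain ⟨a, b, hab, rfl⟩ := Set.ncard_eq_two.mp h
  simp only [Set.mem_insert_iff, Set.mem_singleton_iff] at hx hy
  rcases hx with rfl | rfl <;> rcases hy with rfl | rfl
  · exact absurd rfl hxy
  · rfl
  · exact Set.pair_comm y x
  · exact absurd rfl hxy

lemma exists_half_matching [Fintype V] [Nonempty V] {K : SimpleGraph V}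
    (hconn : K.Preconnected) (hreg : ∀ v, (K.neighborSet v).ncard = 2)
    (heven : Even (Fintype.card V)) :
    ∃ M1 : SimpleGraph V, M1 ≤ K ∧ ∀ v, (M1.neighborSet v).ncard = 1 := by
  classical
  obtain ⟨a⟩ := ‹Nonempty V›
  have hane : (K.neighborSet a).Nonempty := by
    apply Set.nonempty_of_ncard_ne_zero
    rw [hreg a]
    omega
  obtain ⟨b, hb⟩ := hane
  set D : ℕ → K.Dart := Dseq hreg ⟨(a, b), hb⟩ with hD
  set f : ℕ → V := fun k => (D k).fst with hf
  have hDsucc : ∀ k, D (k + 1) = nd hreg (D k) := fun k => rfl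
  have hadj : ∀ k, K.Adj (f k) (f (k + 1)) := fun k => (D k).adj
  have hF2 : ∀ k, f (k + 2) ≠ f k := fun k => nd_snd_ne hreg (D k)
  haveI : Finite K.Dart :=
    Finite.of_injective (fun d => d.toProd) (fun d d' h => SimpleGraph.Dart.ext _ _ h)
  obtain ⟨i0, j0, hij0, hDij0⟩ := Finite.exists_ne_map_eq_of_infinite D
  have hcancel : ∀ i j, D i = D j → i ≤ j → D (j - i) = D 0 := by
    intro i
    induction i with
    | zero => intro j h _; simpa using h.symm
    | succ i ih =>
      intro j h hle
      cases j with
      | zero => omega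
      | succ j =>
        have h' : D i = D j := nd_inj hreg (by rw [← hDsucc, ← hDsucc]; exact h)
        simpa using ih j h' (by omega)
  have hexp : ∃ p, 0 < p ∧ D p = D 0 := by
    rcases lt_or_gt_of_ne hij0 with h | h
    · exact ⟨j0 - i0, by omega, hcancel i0 j0 hDij0 (le_of_lt h)⟩
    · exact ⟨i0 - j0, by omega, hcancel j0 i0 hDij0.symm (le_of_lt h)⟩
  set p := Nat.find hexp with hpdef
  have hp : 0 < p ∧ D p = D 0 := Nat.find_spec hexp
  have hmin : ∀ q, q < p → ¬(0 < q ∧ D q = D 0) := fun q hq => Nat.find_min hexp hq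
  have hper : ∀ k, D (k + p) = D k := by
    intro k
    induction k with
    | zero => simpa using hp.2
    | succ k ih =>
      have h1 : k + 1 + p = (k + p) + 1 := by omega
      rw [h1, hDsucc, ih, hDsucc]
  have fper : ∀ k, f (k + p) = f k := fun k => congrArg (fun d : K.Dart => d.fst) (hper k)
  have fmul : ∀ m k, f (k + m * p) = f k := by
    intro m
    induction m with
    | zero => simp
    | succ m ih =>
      intro k
      have h1 : k + (m + 1) * p = (k + m * p) + p := by ring
      rw [h1, fper, ih]
  have hmod : ∀ k, f k = f (k % p) := by
    intro k
    conv_lhs => rw [show k = k % p + (k / p) * p from (Nat.mod_add_div' k p).symm]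
    exact fmul _ _
  have hdd : ∀ i j, i < j → j < p → D i ≠ D j := by
    intro i j h1 h2 heq
    exact hmin (j - i) (by omega) ⟨by omega, hcancel i j heq (le_of_lt h1)⟩
  -- injectivity of f on [0, p)
  have hvinj : ∀ i j, i < j → j < p → f i ≠ f j := by
    by_contra hc
    push_neg at hc
    obtain ⟨ii, jj, hlt0, hp0, heq0⟩ := hc
    have hQ : ∃ j, j < p ∧ ∃ i, i < j ∧ f i = f j := ⟨jj, hp0, ii, hlt0, heq0⟩
    obtain ⟨hjp, i, hij, hfij⟩ := Nat.find_spec hQ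
    set j := Nat.find hQ with hjdef
    have h1 : i + 1 ≠ j := by
      intro h
      have h2 := hadj i
      rw [h, ← hfij] at h2
      exact h2.ne rfl
    have h2 : i + 2 ≠ j := by
      intro h
      apply hF2 i
      rw [h]
      exact hfij.symm
    have hij1 : i + 1 < j := by omega
    have hsucc : f (i + 1) ≠ f (j + 1) := by
      intro h
      apply hdd i j hij hjp
      exact SimpleGraph.Dart.ext _ _ (Prod.ext hfij h)
    have hvmem1 : f (i + 1) ∈ K.neighborSet (f j) := by
      rw [← hfij]
      exact hadj i
    have hvmem2 : f (j + 1) ∈ K.neighborSet (f j) := hadj j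
    have hNv : K.neighborSet (f j) = {f (i + 1), f (j + 1)} :=
      pair_eq' (hreg (f j)) hvmem1 hvmem2 hsucc
    obtain ⟨j', hj'⟩ : ∃ j', j' + 1 = j := ⟨j - 1, by omega⟩
    have hpred_mem : f j' ∈ K.neighborSet (f j) := by
      have h3 := hadj j'
      rw [hj'] at h3
      exact h3.symm
    have hpredne : f j' ≠ f (j + 1) := by
      have h3 := hF2 j'
      rw [show j' + 2 = j + 1 by omega] at h3
      exact h3.symm
    have hpred_eq : f j' = f (i + 1) := by
      rw [hNv] at hpred_mem
      simp only [Set.mem_insert_iff, Set.mem_singleton_iff] at hpred_mem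
      tauto
    have hlt2 : i + 1 < j' := by omega
    exact Nat.find_min hQ (show j' < j by omega) ⟨by omega, i + 1, hlt2, hpred_eq.symm⟩
  -- surjectivity
  have hstep : ∀ k w, K.Adj (f k) w → ∃ l, f l = w := by
    intro k w hw
    obtain ⟨k', hk'⟩ : ∃ k', k' + 1 = k + p := ⟨k + p - 1, by omega⟩
    have h1 : f (k + p + 1) ∈ K.neighborSet (f k) := by
      have h3 := hadj (k + p)
      rw [fper] at h3
      exact h3
    have h2 : f k' ∈ K.neighborSet (f k) := by
      have h3 := hadj k'
      rw [hk', fper k] at h3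
      exact h3.symm
    have h3 : f (k + p + 1) ≠ f k' := by
      have h4 := hF2 k'
      rw [show k' + 2 = k + p + 1 by omega] at h4
      exact h4
    have hN := pair_eq' (hreg (f k)) h1 h2 h3
    have hwmem : w ∈ K.neighborSet (f k) := hw
    rw [hN] at hwmem
    simp only [Set.mem_insert_iff, Set.mem_singleton_iff] at hwmem
    rcases hwmem with h | h
    · exact ⟨k + p + 1, h.symm⟩
    · exact ⟨k', h.symm⟩
  have hrange : ∀ w, ∃ l, f l = w := by
    intro w
    obtain ⟨q⟩ := hconn a w
    have main : ∀ (x y : V) (q : K.Walk x y), (∃ l, f l = x) → (∃ l, f l = y) := by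
      intro x y q
      induction q with
      | nil => exact id
      | @cons x z y h q ih =>
        rintro ⟨l, hl⟩
        exact ih (hstep l z (hl ▸ h))
    exact main a w q ⟨0, rfl⟩
  have hsurj : ∀ w, ∃ k, k < p ∧ f k = w := by
    intro w
    obtain ⟨l, hl⟩ := hrange w
    exact ⟨l % p, Nat.mod_lt _ hp.1, by rw [← hmod]; exact hl⟩
  -- p = card V
  have hpcard : p = Fintype.card V := by
    have hbij : Function.Bijective (fun i : Fin p => f i.val) := by
      constructor
      · rintro ⟨i, hi⟩ ⟨j, hj⟩ h
        simp only at h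
        apply Fin.ext
        simp only
        rcases lt_trichotomy i j with hl | hl | hl
        · exact absurd h (hvinj i j hl hj)
        · exact hl
        · exact absurd h.symm (hvinj j i hl hi)
      · intro w
        obtain ⟨k, hk, hfk⟩ := hsurj w
        exact ⟨⟨k, hk⟩, hfk⟩
    have := Fintype.card_of_bijective hbij
    simpa using this
  have hpeven : Even p := hpcard ▸ heven
  -- the index function and the pairing involution
  have hex : ∀ v : V, ∃ k, k < p ∧ f k = v := hsurj
  set idx : V → ℕ := fun v => Nat.find (hex v) with hidx
  have hidxlt : ∀ v, idx v < p := fun v => (Nat.find_spec (hex v)).1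
  have hidxf : ∀ v, f (idx v) = v := fun v => (Nat.find_spec (hex v)).2
  have hidx_unique : ∀ k, k < p → idx (f k) = k := by
    intro k hk
    have h2 := hidxf (f k)
    rcases lt_trichotomy (idx (f k)) k with h | h | h
    · exact absurd h2 (hvinj _ _ h hk)
    · exact h
    · exact absurd h2.symm (hvinj _ _ h (hidxlt _))
  set g : V → V := fun v => if Even (idx v) then f (idx v + 1) else f (idx v - 1) with hg
  have hkey : ∀ v, Even (idx v) → idx v + 1 < p := by
    intro v h
    have h1 := hidxlt v
    have h2 := hpeven
    rw [Nat.even_iff] at h h2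
    omega
  have hpos : ∀ v, ¬ Even (idx v) → 0 < idx v := by
    intro v h
    rcases Nat.eq_zero_or_pos (idx v) with h0 | h0
    · exact absurd (h0 ▸ Even.zero) h
    · exact h0
  have hginv : ∀ v, g (g v) = v := by
    intro v
    by_cases h : Even (idx v)
    · have hgv : g v = f (idx v + 1) := if_pos h
      have hi1 : idx (g v) = idx v + 1 := by rw [hgv, hidx_unique _ (hkey v h)]
      have hodd : ¬ Even (idx (g v)) := by
        rw [hi1, Nat.even_add_one]
        simpa using h
      have h5 : g (g v) = f (idx (g v) - 1) := if_neg hodd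
      rw [h5, hi1]
      simpa using hidxf v
    · have hi0 : 0 < idx v := hpos v h
      have hgv : g v = f (idx v - 1) := if_neg h
      have hlt : idx v - 1 < p := by have := hidxlt v; omega
      have hi1 : idx (g v) = idx v - 1 := by rw [hgv, hidx_unique _ hlt]
      have hevn : Even (idx (g v)) := by
        rw [hi1]
        rw [Nat.even_iff] at h ⊢
        omega
      have h5 : g (g v) = f (idx (g v) + 1) := if_pos hevn
      rw [h5, hi1, show idx v - 1 + 1 = idx v from by omega]
      exact hidxf v
  have hgadj : ∀ v, K.Adj v (g v) := by
    intro v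
    by_cases h : Even (idx v)
    · have hgv : g v = f (idx v + 1) := if_pos h
      rw [hgv]
      conv_lhs => rw [← hidxf v]
      exact hadj _
    · have hi0 : 0 < idx v := hpos v h
      have hgv : g v = f (idx v - 1) := if_neg h
      rw [hgv]
      conv_lhs => rw [← hidxf v]
      have h3 := hadj (idx v - 1)
      rw [show idx v - 1 + 1 = idx v from by omega] at h3
      exact h3.symm
  have hgne : ∀ v, g v ≠ v := fun v h => (h ▸ hgadj v).ne rfl
  refine ⟨SimpleGraph.fromRel (fun u w => g u = w), ?_, ?_⟩
  · intro u w hw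
    simp only [SimpleGraph.fromRel_adj] at hw
    obtain ⟨hne, h | h⟩ := hw
    · exact h ▸ hgadj u
    · exact (h ▸ hgadj w).symm
  · intro v
    have hset : (SimpleGraph.fromRel (fun u w => g u = w)).neighborSet v = {g v} := by
      ext w
      simp only [SimpleGraph.mem_neighborSet, SimpleGraph.fromRel_adj, Set.mem_singleton_iff]
      constructor
      · rintro ⟨hne, h | h⟩
        · exact h.symm
        · rw [← h, hginv]
      · rintro rfl
        exact ⟨(hgne v).symm, Or.inl rfl⟩
    rw [hset, Set.ncard_singleton]


open SimpleGraph

/-- the subgraph of `G` induced by a connected component of a subgraph `K ≤ G` -/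
def compSub (G K : SimpleGraph V) (hK : K ≤ G) (c : K.ConnectedComponent) : G.Subgraph where
  verts := c.supp
  Adj u v := K.Adj u v ∧ u ∈ c.supp
  adj_sub h := hK h.1
  edge_vert h := h.2
  symm := by
    constructor
    rintro u v ⟨h, hu⟩
    refine ⟨h.symm, ?_⟩
    rw [ConnectedComponent.mem_supp_iff] at hu ⊢
    exact (SimpleGraph.ConnectedComponent.connectedComponentMk_eq_of_adj h.symm).trans hu

lemma compSub_nbr {G K : SimpleGraph V} (hK : K ≤ G) (c : K.ConnectedComponent) {v : V}
    (hv : v ∈ c.supp) : (compSub G K hK c).neighborSet v = K.neighborSet v := by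
  ext w
  simp only [Subgraph.mem_neighborSet, mem_neighborSet]
  exact ⟨fun h => h.1, fun h => ⟨h, hv⟩⟩

lemma mem_compSub_edgeSet {G K : SimpleGraph V} (hK : K ≤ G) (c : K.ConnectedComponent)
    (e : Sym2 V) :
    e ∈ (compSub G K hK c).edgeSet ↔
      e ∈ K.edgeSet ∧ K.connectedComponentMk (Quot.out e).1 = c := by
  induction e using Sym2.ind with
  | _ u v =>
    have hout := Sym2.out_fst_mem s(u, v)
    rw [Sym2.mem_iff] at hout
    constructor
    · intro h
      obtain ⟨hadj, hu⟩ := (Subgraph.mem_edgeSet).mp h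
      refine ⟨hadj, ?_⟩
      rw [ConnectedComponent.mem_supp_iff] at hu
      rcases hout with h1 | h1 <;> rw [h1]
      · exact hu
      · exact (SimpleGraph.ConnectedComponent.connectedComponentMk_eq_of_adj hadj).symm.trans hu
    · rintro ⟨he, hφ⟩
      have hadj : K.Adj u v := he
      refine (Subgraph.mem_edgeSet).mpr ⟨hadj, ?_⟩
      rw [ConnectedComponent.mem_supp_iff]
      rcases hout with h1 | h1
      · rw [h1] at hφ
        exact hφ
      · rw [h1] at hφ
        exact (SimpleGraph.ConnectedComponent.connectedComponentMk_eq_of_adj hadj).trans hφ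

lemma compSub_connected {G K : SimpleGraph V} (hK : K ≤ G) (c : K.ConnectedComponent) :
    (compSub G K hK c).Connected := by
  rw [SimpleGraph.Subgraph.connected_iff]
  refine ⟨⟨?_⟩, ?_⟩
  · intro x y
    obtain ⟨x, hx⟩ := x
    obtain ⟨y, hy⟩ := y
    have hx' : K.connectedComponentMk x = c := hx
    have hy' : K.connectedComponentMk y = c := hy
    have hreach : K.Reachable x y := ConnectedComponent.exact (hx'.trans hy'.symm)
    obtain ⟨q⟩ := hreach
    have main : ∀ (a b : V) (q : K.Walk a b) (ha : a ∈ c.supp),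
        ∃ hb : b ∈ c.supp, (compSub G K hK c).coe.Reachable ⟨a, ha⟩ ⟨b, hb⟩ := by
      intro a b q
      induction q with
      | nil => exact fun ha => ⟨ha, Reachable.refl _⟩
      | @cons a z b h q ih =>
        intro ha
        have ha2 : K.connectedComponentMk a = c := ha
        have hz : z ∈ c.supp := by
          rw [ConnectedComponent.mem_supp_iff]
          exact (SimpleGraph.ConnectedComponent.connectedComponentMk_eq_of_adj h).symm.trans ha2
        obtain ⟨hb, hr⟩ := ih hz
        refine ⟨hb, Reachable.trans ?_ hr⟩
        apply SimpleGraph.Adj.reachable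
        rw [SimpleGraph.Subgraph.coe_adj]
        exact ⟨h, ha⟩
    obtain ⟨hy', hr⟩ := main x y q hx
    convert hr
  · obtain ⟨v, hv⟩ := c.exists_rep
    refine ⟨v, ?_⟩
    show v ∈ c.supp
    rw [ConnectedComponent.mem_supp_iff]
    exact hv

lemma comp_edge_count [Fintype V] {G K : SimpleGraph V} (hK : K ≤ G)
    [Fintype K.ConnectedComponent] :
    ((Finset.univ : Finset K.ConnectedComponent).val.map
      (fun c => (compSub G K hK c).edgeSet.ncard)).sum = K.edgeSet.ncard := by
  classical
  show ∑ c : K.ConnectedComponent, (compSub G K hK c).edgeSet.ncard = K.edgeSet.ncard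
  rw [Set.ncard_eq_toFinset_card' K.edgeSet]
  rw [Finset.card_eq_sum_card_fiberwise
    (f := fun e => K.connectedComponentMk (Quot.out e).1) (t := Finset.univ)
    (fun e _ => Finset.mem_univ _)]
  apply Finset.sum_congr rfl
  intro c _
  rw [Set.ncard_eq_toFinset_card']
  congr 1
  ext e
  simp only [Set.mem_toFinset, Finset.mem_filter, mem_compSub_edgeSet]

open SimpleGraph

lemma spanningCoe_neighborSet' {G : SimpleGraph V} (C : G.Subgraph) (v : V) :
    C.spanningCoe.neighborSet v = C.neighborSet v := rfl

/-- handshake in ncard form (copy) -/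
lemma handshake' [Fintype V] (K : SimpleGraph V) :
    ∑ v, (K.neighborSet v).ncard = 2 * K.edgeSet.ncard := by
  classical
  have h := K.sum_degrees_eq_twice_card_edges
  have h1 : ∀ v, (K.neighborSet v).ncard = K.degree v := by
    intro v
    rw [Set.ncard_eq_toFinset_card', SimpleGraph.degree, SimpleGraph.neighborFinset_def]
  have h2 : K.edgeSet.ncard = K.edgeFinset.card := by
    rw [Set.ncard_eq_toFinset_card', SimpleGraph.edgeFinset]
  simp_rw [h1, h2]
  exact h

lemma regular_edge_count [Fintype V] {K : SimpleGraph V} {r : ℕ}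
    (hreg : ∀ v, (K.neighborSet v).ncard = r) : 2 * K.edgeSet.ncard = r * Fintype.card V := by
  have h := handshake' K
  simp_rw [hreg] at h
  rw [Finset.sum_const, smul_eq_mul] at h
  rw [← h]
  exact mul_comm _ _

/-- the multiset of component subgraphs of a 2-regular `K ≤ G` forms cycles covering `K` -/
lemma exists_good_cover [Fintype V] (G : SimpleGraph V) (hcubic : IsCubic G)
    (hham : ∃ C : G.Subgraph, IsCycleSub C ∧ C.verts = Set.univ) :
    ∃ 𝒞 : Multiset G.Subgraph, IsCycleCover G 𝒞 ∧ coverLength 𝒞 = 2 * Fintype.card V := by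
  classical
  obtain ⟨C, ⟨hCconn, hCdeg⟩, hCverts⟩ := hham
  haveI hne : Nonempty V := by
    obtain ⟨v, _⟩ := hCconn.nonempty
    exact ⟨v⟩
  set H : SimpleGraph V := C.spanningCoe with hHdef
  have hHle : H ≤ G := C.spanningCoe_le
  have hHreg : ∀ v, (H.neighborSet v).ncard = 2 := by
    intro v
    rw [hHdef, spanningCoe_neighborSet']
    exact hCdeg v (by rw [hCverts]; trivial)
  have hsp : C.IsSpanning := fun v => by rw [hCverts]; trivial
  have hHconn : H.Preconnected := by
    intro u v
    have h := hCconn ⟨u, hsp u⟩ ⟨v, hsp v⟩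
    exact h.map (C.spanningCoeEquivCoeOfSpanning hsp).symm.toHom
  -- n is even
  have hcubic' : ∀ v : V, (G.neighborSet v).ncard = 3 := hcubic
  have hhs := handshake' G
  simp_rw [hcubic'] at hhs
  rw [Finset.sum_const, smul_eq_mul] at hhs
  have hhs' : Fintype.card V * 3 = 2 * G.edgeSet.ncard := hhs
  have heven : Even (Fintype.card V) := by
    rw [Nat.even_iff]
    omega
  -- split H into two perfect matchings
  obtain ⟨M1, hM1le, hM1deg⟩ := exists_half_matching hHconn hHreg heven
  set M2 : SimpleGraph V := H \ M1 with hM2def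
  have hM2le : M2 ≤ H := sdiff_le
  have hM2deg : ∀ v, (M2.neighborSet v).ncard = 1 := by
    intro v
    have hsub : M1.neighborSet v ⊆ H.neighborSet v := fun w h => hM1le h
    have hdiff : M2.neighborSet v = H.neighborSet v \ M1.neighborSet v := by
      ext w
      simp only [mem_neighborSet, hM2def, sdiff_adj, Set.mem_diff]
    rw [hdiff, Set.ncard_diff hsub (Set.toFinite _), hHreg, hM1deg]
  -- the complementary perfect matching
  set Gm : SimpleGraph V := G \ H with hGmdef
  have hGmle : Gm ≤ G := sdiff_le
  have hGmdeg : ∀ v, (Gm.neighborSet v).ncard = 1 := by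
    intro v
    have hsub : H.neighborSet v ⊆ G.neighborSet v := fun w h => hHle h
    have hdiff : Gm.neighborSet v = G.neighborSet v \ H.neighborSet v := by
      ext w
      simp only [mem_neighborSet, hGmdef, sdiff_adj, Set.mem_diff]
    rw [hdiff, Set.ncard_diff hsub (Set.toFinite _), hHreg, hcubic]
  -- the two cycle graphs
  have key : ∀ M : SimpleGraph V, M ≤ H → (∀ v, (M.neighborSet v).ncard = 1) →
      ∀ v, ((Gm ⊔ M).neighborSet v).ncard = 2 := by
    intro M hMle hMdeg v
    obtain ⟨x, hx⟩ := Set.ncard_eq_one.mp (hGmdeg v)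
    obtain ⟨y, hy⟩ := Set.ncard_eq_one.mp (hMdeg v)
    have hxy : x ≠ y := by
      intro h
      have hx' : Gm.Adj v x := by rw [← SimpleGraph.mem_neighborSet, hx]; rfl
      have hy' : M.Adj v y := by rw [← SimpleGraph.mem_neighborSet, hy]; rfl
      rw [hGmdef, sdiff_adj] at hx'
      exact hx'.2 (h ▸ hMle hy')
    have hN : (Gm ⊔ M).neighborSet v = {x, y} := by
      ext w
      simp only [mem_neighborSet, sup_adj, Set.mem_insert_iff, Set.mem_singleton_iff]
      constructor
      · rintro (h | h)
        · left
          have : w ∈ Gm.neighborSet v := h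
          rw [hx] at this
          exact this
        · right
          have : w ∈ M.neighborSet v := h
          rw [hy] at this
          exact this
      · rintro (rfl | rfl)
        · left
          have : w ∈ Gm.neighborSet v := by rw [hx]; rfl
          exact this
        · right
          have : w ∈ M.neighborSet v := by rw [hy]; rfl
          exact this
    rw [hN, Set.ncard_pair hxy]
  set K1 : SimpleGraph V := Gm ⊔ M1 with hK1def
  set K2 : SimpleGraph V := Gm ⊔ M2 with hK2def
  have hK1le : K1 ≤ G := sup_le hGmle (hM1le.trans hHle)
  have hK2le : K2 ≤ G := sup_le hGmle (hM2le.trans hHle)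
  have hK1reg := key M1 hM1le hM1deg
  have hK2reg := key M2 hM2le hM2deg
  set 𝒞1 : Multiset G.Subgraph :=
    (Finset.univ : Finset K1.ConnectedComponent).val.map (compSub G K1 hK1le) with h𝒞1
  set 𝒞2 : Multiset G.Subgraph :=
    (Finset.univ : Finset K2.ConnectedComponent).val.map (compSub G K2 hK2le) with h𝒞2
  refine ⟨𝒞1 + 𝒞2, ⟨?_, ?_⟩, ?_⟩
  · -- every member is a cycle
    intro D hD
    rw [Multiset.mem_add] at hD
    have main : ∀ (K : SimpleGraph V) (hKle : K ≤ G)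
        (hKreg : ∀ v, (K.neighborSet v).ncard = 2) (c : K.ConnectedComponent),
        IsCycleSub (compSub G K hKle c) := by
      intro K hKle hKreg c
      refine ⟨compSub_connected hKle c, ?_⟩
      intro v hv
      rw [compSub_nbr hKle c hv]
      exact hKreg v
    rcases hD with hD | hD <;> rw [Multiset.mem_map] at hD <;> obtain ⟨c, _, rfl⟩ := hD
    · exact main K1 hK1le hK1reg c
    · exact main K2 hK2le hK2reg c
  · -- coverage
    intro e he
    have hsplit : e ∈ K1.edgeSet ∨ e ∈ K2.edgeSet := by
      by_cases hH : e ∈ H.edgeSet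
      · by_cases hM : e ∈ M1.edgeSet
        · left
          rw [hK1def, edgeSet_sup]
          exact Set.mem_union_right _ hM
        · right
          rw [hK2def, edgeSet_sup, hM2def, edgeSet_sdiff]
          refine Set.mem_union_right _ ?_
          rw [SimpleGraph.edgeSet_sdiff]
          exact (Set.mem_diff _).mpr ⟨hH, hM⟩
      · left
        rw [hK1def, edgeSet_sup]
        refine Set.mem_union_left _ ?_
        rw [hGmdef, SimpleGraph.edgeSet_sdiff]
        exact (Set.mem_diff _).mpr ⟨he, hH⟩
    rcases hsplit with h | h
    · refine ⟨compSub G K1 hK1le (K1.connectedComponentMk (Quot.out e).1), ?_, ?_⟩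
      · rw [Multiset.mem_add]
        left
        rw [h𝒞1, Multiset.mem_map]
        exact ⟨_, Finset.mem_univ_val _, rfl⟩
      · rw [mem_compSub_edgeSet]
        exact ⟨h, rfl⟩
    · refine ⟨compSub G K2 hK2le (K2.connectedComponentMk (Quot.out e).1), ?_, ?_⟩
      · rw [Multiset.mem_add]
        right
        rw [h𝒞2, Multiset.mem_map]
        exact ⟨_, Finset.mem_univ_val _, rfl⟩
      · rw [mem_compSub_edgeSet]
        exact ⟨h, rfl⟩
  · -- length
    have hlen : ∀ (K : SimpleGraph V) (hKle : K ≤ G) [Fintype K.ConnectedComponent],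
        ((Finset.univ : Finset K.ConnectedComponent).val.map (compSub G K hKle)).map
          (fun D => D.edgeSet.ncard) = (Finset.univ : Finset K.ConnectedComponent).val.map
          (fun c => (compSub G K hKle c).edgeSet.ncard) := by
      intro K hKle _
      rw [Multiset.map_map]
      rfl
    rw [coverLength, Multiset.map_add, Multiset.sum_add]
    rw [h𝒞1, h𝒞2, hlen K1 hK1le, hlen K2 hK2le]
    rw [comp_edge_count hK1le, comp_edge_count hK2le]
    have c1 := regular_edge_count hK1reg
    have c2 := regular_edge_count hK2reg
    rw [← hK1def] at c1
    rw [← hK2def] at c2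
    omega


/-- A hamiltonian cubic graph has `scc G = (4/3)m`. -/
theorem statement4 [Fintype V] (G : SimpleGraph V) (hcubic : IsCubic G)
    (hham : ∃ C : G.Subgraph, IsCycleSub C ∧ C.verts = Set.univ) :
    3 * scc G = 4 * G.edgeSet.ncard := by
  classical
  obtain ⟨𝒞, hcov, hlen⟩ := exists_good_cover G hcubic hham
  have hmem : 2 * Fintype.card V ∈
      {L : ℕ | ∃ 𝒞 : Multiset G.Subgraph, IsCycleCover G 𝒞 ∧ coverLength 𝒞 = L} := ⟨𝒞, hcov, hlen⟩
  have hscc : scc G = 2 * Fintype.card V := by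
    apply le_antisymm
    · exact Nat.sInf_le hmem
    · apply le_csInf ⟨_, hmem⟩
      rintro L ⟨𝒟, hc, rfl⟩
      exact lower_bound hcubic hc
  rw [hscc]
  have hcubic' : ∀ v : V, (G.neighborSet v).ncard = 3 := hcubic
  have h := regular_edge_count hcubic'
  omega

end ShortCycleCovers
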